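/- Under the hypotheses of the Newton convergence setup, if ‖u⁽ⁿ⁾ − u*‖ ≤ min(ρ*/θ̄, 1/(2θρ*)), then the next Newton iterate satisfies ‖u⁽ⁿ⁺¹⁾ − u*‖ ≤ (1/2)‖u⁽ⁿ⁾ − u*‖; in particular the distance to u* is halved at each step. -/

import Mathlib

/-- In the Newton convergence setup, if `‖uₙ − u*‖ ≤ min (ρ*/θ̄) (1/(2θρ*))`,
then the next Newton iterate satisfies `‖uₙ₊₁ − u*‖ ≤ (1/2)‖uₙ − u*‖`. -/
theorem newton_error_halving
    {E : Type*} [NormedAddCommGroup E] [NormedSpace ℝ E] [FiniteDimensional ℝ E]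
    (O : Set E) (hO : IsOpen O) (hOconv : Convex ℝ O)
    (f : E → E) (Df : E → (E →L[ℝ] E)) (g : E → (E →L[ℝ] E))
    (hf : ∀ u ∈ O, HasFDerivAt f (Df u) u)
    (hinv₁ : ∀ u ∈ O, (Df u).comp (g u) = ContinuousLinearMap.id ℝ E)
    (hinv₂ : ∀ u ∈ O, (g u).comp (Df u) = ContinuousLinearMap.id ℝ E)
    (θ θbar : ℝ)
    (hLip : ∀ u ∈ O, ∀ v ∈ O, ‖Df u - Df v‖ ≤ θ * ‖u - v‖)
    (hLipInv : ∀ u ∈ O, ∀ v ∈ O, ‖g u - g v‖ ≤ θbar * ‖u - v‖)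
    (ustar : E) (hustar : ustar ∈ O) (hroot : f ustar = 0)
    (ρ : ℝ) (hρ : ρ = ‖g ustar‖)
    (hball : {u : E | ‖u - ustar‖ ≤ min (ρ / θbar) (1 / (2 * θ * ρ))} ⊆ O)
    (un : ℕ → E) (n : ℕ)
    (hclose : ‖un n - ustar‖ ≤ min (ρ / θbar) (1 / (2 * θ * ρ)))
    (hUrec : un (n + 1) = un n - g (un n) (f (un n))) :
    ‖un (n + 1) - ustar‖ ≤ (1 / 2) * ‖un n - ustar‖ := by
  by_cases h0 : un n = ustar
  · simp [hUrec, h0, hroot]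
  set u := un n with hu
  set e := u - ustar with he
  set r := ‖e‖ with hrdef
  have hrpos : 0 < r := norm_pos_iff.mpr (sub_ne_zero.mpr h0)
  have hc1 : r ≤ ρ / θbar := hclose.trans (min_le_left _ _)
  have hc2 : r ≤ 1 / (2 * θ * ρ) := hclose.trans (min_le_right _ _)
  -- membership of the segment in O
  have hmem : ∀ t ∈ Set.Icc (0:ℝ) 1, ustar + t • e ∈ O := by
    intro t ht
    apply hball
    simp only [Set.mem_setOf_eq, add_sub_cancel_left]
    calc ‖t • e‖ = ‖t‖ * r := norm_smul _ _
      _ ≤ 1 * r := by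
          apply mul_le_mul_of_nonneg_right _ (norm_nonneg _)
          rw [Real.norm_eq_abs, abs_of_nonneg ht.1]; exact ht.2
      _ = r := one_mul r
      _ ≤ _ := hclose
  have huO : u ∈ O := by
    have h1 := hmem 1 (by norm_num)
    rw [one_smul, he] at h1
    simpa using h1
  -- positivity facts
  have hθbar0 : 0 ≤ θbar := by
    have h1 := hLipInv u huO ustar hustar
    nlinarith [norm_nonneg (g u - g ustar)]
  have hθbar : 0 < θbar := by
    rcases hθbar0.lt_or_eq with h | h
    · exact h
    · exfalso; rw [← h, div_zero] at hc1; linarith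
  have hρ0 : 0 < ρ := by
    have h2 : 0 < ρ / θbar := hrpos.trans_le hc1
    have h3 := mul_pos h2 hθbar
    rwa [div_mul_cancel₀ _ hθbar.ne'] at h3
  have hθρ : 0 < 2 * θ * ρ := by
    by_contra h
    push_neg at h
    have : (1:ℝ) / (2 * θ * ρ) ≤ 0 := one_div_nonpos.mpr h
    linarith
  have hθ : 0 < θ := by nlinarith
  -- Taylor estimate with integral-free fencing argument
  set hfun : ℝ → E := fun t => f (ustar + t • e) - t • ((Df u) e) with hfundef
  set h' : ℝ → E := fun t => (Df (ustar + t • e)) e - (Df u) e with h'def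
  have hd : ∀ t ∈ Set.Icc (0:ℝ) 1, HasDerivAt hfun (h' t) t := by
    intro t ht
    have hp := hf _ (hmem t ht)
    have hline : HasDerivAt (fun s : ℝ => ustar + s • e) e t := by
      simpa using ((hasDerivAt_id t).smul_const e).const_add ustar
    have h1 : HasDerivAt (fun s : ℝ => f (ustar + s • e)) ((Df (ustar + t • e)) e) t :=
      hp.comp_hasDerivAt t hline
    have h2 : HasDerivAt (fun s : ℝ => s • ((Df u) e)) ((Df u) e) t := by
      simpa using (hasDerivAt_id t).smul_const ((Df u) e)
    exact h1.sub h2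
  have hB : ∀ x : ℝ, HasDerivAt (fun t : ℝ => θ * r ^ 2 * (t - t ^ 2 / 2))
      (θ * r ^ 2 * (1 - x)) x := by
    intro x
    have hinner : HasDerivAt (fun t : ℝ => t - t ^ 2 / 2) (1 - x) x := by
      have h1 := (hasDerivAt_id' x).sub ((hasDerivAt_pow 2 x).div_const 2)
      refine h1.congr_deriv ?_
      norm_num
    exact hinner.const_mul (θ * r ^ 2)
  have hbound : ∀ t ∈ Set.Ico (0:ℝ) 1, ‖h' t‖ ≤ θ * r ^ 2 * (1 - t) := by
    intro t ht
    have hpO := hmem t ⟨ht.1, ht.2.le⟩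
    have hdiff : ustar + t • e - u = (t - 1) • e := by
      rw [sub_smul, one_smul, he]; abel
    have hnorm : ‖ustar + t • e - u‖ = (1 - t) * r := by
      rw [hdiff, norm_smul, Real.norm_eq_abs, abs_of_nonpos (by linarith [ht.2])]
      rw [← hrdef]; ring
    calc ‖h' t‖ = ‖(Df (ustar + t • e) - Df u) e‖ := by
          simp [h'def, ContinuousLinearMap.sub_apply]
      _ ≤ ‖Df (ustar + t • e) - Df u‖ * r := (Df (ustar + t • e) - Df u).le_opNorm e
      _ ≤ (θ * ‖ustar + t • e - u‖) * r :=
          mul_le_mul_of_nonneg_right (hLip _ hpO u huO) (norm_nonneg _)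
      _ = θ * r ^ 2 * (1 - t) := by rw [hnorm]; ring
  have hcont : ContinuousOn hfun (Set.Icc (0:ℝ) 1) :=
    fun t ht => (hd t ht).continuousAt.continuousWithinAt
  have key := image_norm_le_of_norm_deriv_right_le_deriv_boundary hcont
    (fun t ht => (hd t ⟨ht.1, ht.2.le⟩).hasDerivWithinAt)
    (B := fun t : ℝ => θ * r ^ 2 * (t - t ^ 2 / 2)) (B' := fun t : ℝ => θ * r ^ 2 * (1 - t))
    (by simp [hfundef, hroot]) hB hbound (Set.right_mem_Icc.mpr zero_le_one)
  have hkey : ‖f u - (Df u) e‖ ≤ θ * r ^ 2 / 2 := by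
    have h1 : hfun 1 = f u - (Df u) e := by
      simp only [hfundef, one_smul]
      rw [he]
      congr 2
      abel
    rw [h1] at key
    calc ‖f u - (Df u) e‖ ≤ θ * r ^ 2 * (1 - 1 ^ 2 / 2) := key
      _ = θ * r ^ 2 / 2 := by ring
  -- iteration identity
  have hid : (g u) ((Df u) e) = e := by
    have h1 := hinv₂ u huO
    calc (g u) ((Df u) e) = ((g u).comp (Df u)) e := rfl
      _ = e := by rw [h1]; rfl
  have hiter : un (n + 1) - ustar = (g u) ((Df u) e - f u) := by
    rw [map_sub, hid, hUrec, he]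
    abel
  -- bound on ‖g u‖
  have hgu : ‖g u‖ ≤ 2 * ρ := by
    have h1 : ‖g u - g ustar‖ ≤ θbar * r := hLipInv u huO ustar hustar
    have h2 := norm_sub_norm_le (g u) (g ustar)
    have h3 : θbar * r ≤ ρ := by
      rw [le_div_iff₀ hθbar] at hc1
      nlinarith
    rw [← hρ] at h2
    linarith
  -- final estimate
  have hc2' : r * (2 * θ * ρ) ≤ 1 := by rwa [le_div_iff₀ hθρ] at hc2
  calc ‖un (n + 1) - ustar‖ = ‖(g u) ((Df u) e - f u)‖ := by rw [hiter]
    _ ≤ ‖g u‖ * ‖(Df u) e - f u‖ := (g u).le_opNorm _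
    _ = ‖g u‖ * ‖f u - (Df u) e‖ := by rw [norm_sub_rev]
    _ ≤ (2 * ρ) * (θ * r ^ 2 / 2) :=
        mul_le_mul hgu hkey (norm_nonneg _) (by positivity)
    _ ≤ (1 / 2) * r := by nlinarith [mul_le_mul_of_nonneg_left hc2' hrpos.le]
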